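/- Let K ⊆ L• be a knowledge base each of whose members is in normal form, let R*_K = (L_0, …, L_{n-1}, L_∞), and let R = (M_0, …, M_{n-1}, M_∞) be any other ranked model of K (both represented with the same number of finite-index cells, padding with empty cells). Then for every i ∈ {0, …, n-1}: if L_j = M_j for all j < i, then M_i ⊆ L_i. -/

import Mathlib

attribute [local instance] Classical.propDecidable

universe u

/-- Sentences of Propositional Typicality Logic over atoms `P`. -/
inductive PTL (P : Type u) : Type u
  | atom : P → PTL P
  | neg  : PTL P → PTL P
  | conj : PTL P → PTL P → PTL P
  | top  : PTL P
  | bot  : PTL P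
  | typ  : PTL P → PTL P

namespace PTL

/-- Material implication, defined from `¬` and `∧`. -/
def impl {P : Type u} (a b : PTL P) : PTL P := neg (conj a (neg b))

/-- Disjunction, defined from `¬` and `∧`. -/
def disj {P : Type u} (a b : PTL P) : PTL P := neg (conj (neg a) (neg b))

/-- Purely propositional sentences: no occurrence of the typicality operator. -/
def IsProp {P : Type u} : PTL P → Prop
  | atom _ => True
  | neg a => IsProp a
  | conj a b => IsProp a ∧ IsProp b
  | top => True
  | bot => True
  | typ _ => False

end PTL

/-- Propositional valuations. -/
abbrev Val (P : Type u) := P → Bool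

/-- Satisfaction of a PTL sentence by a valuation, relative to a ranking
function `rho : Val P → ℕ∞`. -/
def satR {P : Type u} (rho : Val P → ℕ∞) : Val P → PTL P → Prop
  | v, PTL.atom p => v p = true
  | v, PTL.neg a => ¬ satR rho v a
  | v, PTL.conj a b => satR rho v a ∧ satR rho v b
  | _, PTL.top => True
  | _, PTL.bot => False
  | v, PTL.typ a => satR rho v a ∧ ∀ v', rho v' < rho v → ¬ satR rho v' a

/-- The convexity property of ranking functions. -/
def RkConvex {P : Type u} (rho : Val P → ℕ∞) : Prop :=
  ∀ (v : Val P) (i : ℕ), rho v = (i : ℕ∞) → ∀ j : ℕ, j < i → ∃ v', rho v' = (j : ℕ∞)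

/-- A ranked interpretation: a convex ranking function on valuations. -/
structure RankedInterp (P : Type u) where
  rk : Val P → ℕ∞
  convex : RkConvex rk

/-- `rho` is a ranked model of `a`: every possible valuation satisfies `a`. -/
def modelsR {P : Type u} (rho : Val P → ℕ∞) (a : PTL P) : Prop :=
  ∀ v, rho v < ⊤ → satR rho v a

/-- `R ⊨ a`. -/
def RankedInterp.models {P : Type u} (R : RankedInterp P) (a : PTL P) : Prop :=
  modelsR R.rk a

/-- `R` is a ranked model of the knowledge base `K`. -/
def modelsSet {P : Type u} (R : RankedInterp P) (K : Set (PTL P)) : Prop :=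
  ∀ a ∈ K, R.models a

/-- Ranked entailment consequences of `K`. -/
def Cn0 {P : Type u} (K : Set (PTL P)) : Set (PTL P) :=
  {a | ∀ R : RankedInterp P, modelsSet R K → R.models a}

/-- Conjunction of a list of sentences (empty conjunction is `⊤`). -/
def bigConj {P : Type u} : List (PTL P) → PTL P
  | [] => PTL.top
  | a :: l => PTL.conj a (bigConj l)

/-- Disjunction of a list of sentences (empty disjunction is `⊥`). -/
def bigDisj {P : Type u} : List (PTL P) → PTL P
  | [] => PTL.bot
  | a :: l => PTL.disj a (bigDisj l)

/-- `a` is in normal form: `⋀_{i≤t} •θᵢ → (φ ∨ ⋁_{i≤s} •ψᵢ)` with all the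
`θᵢ`, `φ`, `ψᵢ` purely propositional. -/
def InNormalForm {P : Type u} (a : PTL P) : Prop :=
  ∃ (ths : List (PTL P)) (phi : PTL P) (pss : List (PTL P)),
    (∀ t ∈ ths, t.IsProp) ∧ phi.IsProp ∧ (∀ s ∈ pss, s.IsProp) ∧
    a = PTL.impl (bigConj (ths.map PTL.typ)) (PTL.disj phi (bigDisj (pss.map PTL.typ)))

/-- `R^1_S`: increase by one the rank of every valuation not in `S`. -/
noncomputable def bump {P : Type u} (rho : Val P → ℕ∞) (S : Set (Val P)) : Val P → ℕ∞ :=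
  fun v => if v ∈ S then rho v else rho v + 1

/-- `R^∞_S`: make every valuation not in `S` impossible. -/
noncomputable def toInf {P : Type u} (rho : Val P → ℕ∞) (S : Set (Val P)) : Val P → ℕ∞ :=
  fun v => if v ∈ S then rho v else ⊤

/-- `⟦K⟧_rho`: the possible valuations satisfying every member of `K`. -/
def KExt {P : Type u} (K : Set (PTL P)) (rho : Val P → ℕ∞) : Set (Val P) :=
  {v | rho v < ⊤ ∧ ∀ a ∈ K, satR rho v a}

/-- The sequence `R_i` of the LM-minimal construction. -/
noncomputable def Rseq {P : Type u} (K : Set (PTL P)) : ℕ → Val P → ℕ∞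
  | 0 => fun _ => 0
  | i + 1 => bump (Rseq K i) (KExt K (Rseq K i))

/-- The sequence `S_i` of the LM-minimal construction:
`S_0 = ∅`, `S_{i+1} = ⟦K⟧_{R_i}`. -/
noncomputable def Sseq {P : Type u} (K : Set (PTL P)) : ℕ → Set (Val P)
  | 0 => ∅
  | i + 1 => KExt K (Rseq K i)

/-- The least `i ≥ 1` with `S_i = S_{i-1}`. -/
noncomputable def stopIdx {P : Type u} (K : Set (PTL P)) : ℕ :=
  sInf {i : ℕ | 1 ≤ i ∧ Sseq K i = Sseq K (i - 1)}

/-- The LM-minimal ranked interpretation `R*_K := (R_{i-1})^∞_{S_i}`. -/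
noncomputable def Rstar {P : Type u} (K : Set (PTL P)) : Val P → ℕ∞ :=
  toInf (Rseq K (stopIdx K - 1)) (Sseq K (stopIdx K))

/-- The cell of rank `i` of a ranking function. -/
def cell {P : Type u} (rho : Val P → ℕ∞) (i : ℕ∞) : Set (Val P) :=
  {u | rho u = i}

section PTLAux

variable {P : Type u}

lemma satR_prop_iff {a : PTL P} (ha : a.IsProp) (ρ ρ' : Val P → ℕ∞) (v : Val P) :
    satR ρ v a ↔ satR ρ' v a := by
  induction a with
  | atom p => simp [satR]
  | neg b ih => simp only [satR]; rw [ih ha]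
  | conj b c ihb ihc => simp only [satR]; rw [ihb ha.1, ihc ha.2]
  | top => simp [satR]
  | bot => simp [satR]
  | typ b ih => exact ha.elim

lemma satR_order_iff {ρ ρ' : Val P → ℕ∞} (h : ∀ u w, ρ u < ρ w ↔ ρ' u < ρ' w)
    (a : PTL P) : ∀ v, satR ρ v a ↔ satR ρ' v a := by
  induction a with
  | atom p => intro v; simp [satR]
  | neg b ih => intro v; simp only [satR]; rw [ih v]
  | conj b c ihb ihc => intro v; simp only [satR]; rw [ihb v, ihc v]
  | top => intro v; simp [satR]
  | bot => intro v; simp [satR]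
  | typ b ih =>
    intro v
    simp only [satR]
    constructor
    · rintro ⟨h1, h2⟩
      exact ⟨(ih v).mp h1, fun v' hv' hs => h2 v' ((h v' v).mpr hv') ((ih v').mpr hs)⟩
    · rintro ⟨h1, h2⟩
      exact ⟨(ih v).mpr h1, fun v' hv' hs => h2 v' ((h v' v).mp hv') ((ih v').mp hs)⟩

lemma sat_impl (ρ : Val P → ℕ∞) (v : Val P) (a b : PTL P) :
    satR ρ v (PTL.impl a b) ↔ (satR ρ v a → satR ρ v b) := by
  simp only [PTL.impl, satR]; tauto

lemma sat_disj (ρ : Val P → ℕ∞) (v : Val P) (a b : PTL P) :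
    satR ρ v (PTL.disj a b) ↔ (satR ρ v a ∨ satR ρ v b) := by
  simp only [PTL.disj, satR]; tauto

lemma sat_bigConj (ρ : Val P → ℕ∞) (v : Val P) (l : List (PTL P)) :
    satR ρ v (bigConj l) ↔ ∀ a ∈ l, satR ρ v a := by
  induction l with
  | nil => simp [bigConj, satR]
  | cons a l ih => simp [bigConj, satR, ih]

lemma sat_bigDisj (ρ : Val P → ℕ∞) (v : Val P) (l : List (PTL P)) :
    satR ρ v (bigDisj l) ↔ ∃ a ∈ l, satR ρ v a := by
  induction l with
  | nil => simp [bigDisj, satR]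
  | cons a l ih => simp [bigDisj, sat_disj, ih]

lemma sat_nf (ρ : Val P → ℕ∞) (v : Val P) (ths : List (PTL P)) (φ : PTL P)
    (pss : List (PTL P)) :
    satR ρ v (PTL.impl (bigConj (ths.map PTL.typ)) (PTL.disj φ (bigDisj (pss.map PTL.typ)))) ↔
      ((∀ θ ∈ ths, satR ρ v (PTL.typ θ)) →
        (satR ρ v φ ∨ ∃ ψ ∈ pss, satR ρ v (PTL.typ ψ))) := by
  rw [sat_impl, sat_disj, sat_bigConj, sat_bigDisj]
  simp

lemma mem_KExt {K : Set (PTL P)} {ρ : Val P → ℕ∞} {v : Val P} :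
    v ∈ KExt K ρ ↔ ρ v < ⊤ ∧ ∀ a ∈ K, satR ρ v a := Iff.rfl

lemma Sseq_succ (K : Set (PTL P)) (n : ℕ) : Sseq K (n + 1) = KExt K (Rseq K n) := rfl

lemma Rseq_succ (K : Set (PTL P)) (n : ℕ) :
    Rseq K (n + 1) = bump (Rseq K n) (Sseq K (n + 1)) := rfl

lemma bump_mem {ρ : Val P → ℕ∞} {S : Set (Val P)} {v : Val P} (h : v ∈ S) :
    bump ρ S v = ρ v := if_pos h

lemma bump_not_mem {ρ : Val P → ℕ∞} {S : Set (Val P)} {v : Val P} (h : v ∉ S) :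
    bump ρ S v = ρ v + 1 := if_neg h

lemma le_bump (ρ : Val P → ℕ∞) (S : Set (Val P)) (v : Val P) : ρ v ≤ bump ρ S v := by
  unfold bump; split
  · exact le_refl _
  · exact le_self_add

lemma rseq_le (K : Set (PTL P)) (n : ℕ) (v : Val P) : Rseq K n v ≤ (n : ℕ∞) := by
  induction n with
  | zero => simp [Rseq]
  | succ n ih =>
    rw [Rseq_succ]
    unfold bump; split
    · exact le_trans ih (by exact_mod_cast Nat.le_succ n)
    · calc Rseq K n v + 1 ≤ (n : ℕ∞) + 1 := add_le_add ih le_rfl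
        _ = ((n + 1 : ℕ) : ℕ∞) := by push_cast; ring

lemma rseq_lt_top (K : Set (PTL P)) (n : ℕ) (v : Val P) : Rseq K n v < ⊤ :=
  lt_of_le_of_lt (rseq_le K n v) (WithTop.coe_lt_top n)

lemma invariant (K : Set (PTL P)) (hK : ∀ a ∈ K, InNormalForm a) (n : ℕ) :
    Sseq K n ⊆ Sseq K (n + 1) ∧ ∀ v, v ∉ Sseq K (n + 1) → Rseq K n v = (n : ℕ∞) := by
  induction n with
  | zero =>
    constructor
    · intro v hv; exact absurd hv (by simp [Sseq])
    · intro v _; simp [Rseq]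
  | succ n ih =>
    have H2 := ih.2
    have G1 : Sseq K (n + 1) ⊆ Sseq K (n + 2) := by
      intro v hv
      obtain ⟨hvfin, hvsat⟩ := hv
      have hv' : v ∈ Sseq K (n + 1) := ⟨hvfin, hvsat⟩
      have hlev : Rseq K (n + 1) v = Rseq K n v := by
        rw [Rseq_succ]; exact bump_mem hv'
      refine ⟨rseq_lt_top K (n + 1) v, ?_⟩
      intro a ha
      obtain ⟨ths, φ, pss, hths, hφ, hpss, rfl⟩ := hK a ha
      rw [sat_nf]
      intro hante
      have hante' : ∀ θ ∈ ths, satR (Rseq K n) v (PTL.typ θ) := by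
        intro θ hθ
        obtain ⟨h1, h2⟩ := hante θ hθ
        refine ⟨(satR_prop_iff (hths θ hθ) _ _ _).mp h1, ?_⟩
        intro u hu hsatu
        by_cases hmem : u ∈ Sseq K (n + 1)
        · refine h2 u ?_ ((satR_prop_iff (hths θ hθ) _ _ _).mp hsatu)
          rw [hlev, Rseq_succ, bump_mem hmem]; exact hu
        · have hn : Rseq K n u = (n : ℕ∞) := H2 u hmem
          rw [hn] at hu
          exact absurd (lt_of_lt_of_le hu (rseq_le K n v)) (lt_irrefl _)
      have hcons := (sat_nf _ _ _ _ _).mp (hvsat _ ha) hante'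
      rcases hcons with hφsat | ⟨ψ, hψ, hc1, hc2⟩
      · left; exact (satR_prop_iff hφ _ _ _).mp hφsat
      · right
        refine ⟨ψ, hψ, (satR_prop_iff (hpss ψ hψ) _ _ _).mp hc1, ?_⟩
        intro w hw hsatw
        refine hc2 w ?_ ((satR_prop_iff (hpss ψ hψ) _ _ _).mp hsatw)
        calc Rseq K n w ≤ Rseq K (n + 1) w := by rw [Rseq_succ]; exact le_bump _ _ _
          _ < Rseq K (n + 1) v := hw
          _ = Rseq K n v := hlev
    refine ⟨G1, ?_⟩
    intro v hv
    have hv1 : v ∉ Sseq K (n + 1) := fun hmem => hv (G1 hmem)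
    rw [Rseq_succ, bump_not_mem hv1, H2 v hv1]
    push_cast; ring

lemma S_mono_le {K : Set (PTL P)} (hK : ∀ a ∈ K, InNormalForm a) {m n : ℕ} (h : m ≤ n) :
    Sseq K m ⊆ Sseq K n := by
  induction n, h using Nat.le_induction with
  | base => exact subset_rfl
  | succ n hmn ih => exact ih.trans (invariant K hK n).1

noncomputable def fE (K : Set (PTL P)) (v : Val P) : ℕ∞ :=
  if h : ∃ m, v ∈ Sseq K (m + 1) then (Nat.find h : ℕ∞) else ⊤

lemma mem_S_iff {K : Set (PTL P)} (hK : ∀ a ∈ K, InNormalForm a) (n : ℕ) (v : Val P) :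
    v ∈ Sseq K (n + 1) ↔ fE K v ≤ (n : ℕ∞) := by
  unfold fE
  split
  · next hex =>
    rw [Nat.cast_le]
    constructor
    · exact fun hv => Nat.find_le hv
    · intro hle
      exact S_mono_le hK (Nat.succ_le_succ hle) (Nat.find_spec hex)
  · next hex =>
    exact iff_of_false (fun hv => hex ⟨n, hv⟩) (by simp)

lemma rseq_eq_min {K : Set (PTL P)} (hK : ∀ a ∈ K, InNormalForm a) (n : ℕ) (v : Val P) :
    Rseq K n v = min (n : ℕ∞) (fE K v) := by
  induction n with
  | zero =>
    have : Rseq K 0 v = 0 := rfl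
    rw [this]
    simp
  | succ n ih =>
    by_cases hv : v ∈ Sseq K (n + 1)
    · have hfe : fE K v ≤ (n : ℕ∞) := (mem_S_iff hK n v).mp hv
      rw [Rseq_succ, bump_mem hv, ih, min_eq_right hfe,
        min_eq_right (hfe.trans (by exact_mod_cast Nat.le_succ n))]
    · have hfe : (n : ℕ∞) < fE K v := by
        by_contra hcon
        push_neg at hcon
        exact hv ((mem_S_iff hK n v).mpr hcon)
      have hfe' : ((n + 1 : ℕ) : ℕ∞) ≤ fE K v := by
        rw [Nat.cast_add, Nat.cast_one]
        exact Order.add_one_le_of_lt hfe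
      rw [Rseq_succ, bump_not_mem hv, ih, min_eq_left hfe.le, min_eq_left hfe']
      push_cast; ring

lemma fE_ne_of_fix {K : Set (PTL P)} (hK : ∀ a ∈ K, InNormalForm a) {m : ℕ}
    (hfix : Sseq K (m + 1) = Sseq K m) (v : Val P) : fE K v ≠ (m : ℕ∞) := by
  intro he
  have hv : v ∈ Sseq K (m + 1) := (mem_S_iff hK m v).mpr he.le
  rw [hfix] at hv
  cases m with
  | zero => exact absurd hv (by simp [Sseq])
  | succ k =>
    have h1 : fE K v ≤ (k : ℕ∞) := (mem_S_iff hK k v).mp hv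
    rw [he] at h1
    have : (k + 1 : ℕ) ≤ k := by exact_mod_cast h1
    omega

lemma min_order (m : ℕ) (a b : ℕ∞) (ha : a ≠ (m : ℕ∞)) (hb : b ≠ (m : ℕ∞)) :
    min (m : ℕ∞) a < min (m : ℕ∞) b ↔
      min ((m + 1 : ℕ) : ℕ∞) a < min ((m + 1 : ℕ) : ℕ∞) b := by
  have hm1 : (m : ℕ∞) ≤ ((m + 1 : ℕ) : ℕ∞) := by exact_mod_cast Nat.le_succ m
  induction a using ENat.recTopCoe with
  | top =>
    rw [min_eq_left (le_top : (m : ℕ∞) ≤ ⊤), min_eq_left (le_top : ((m+1:ℕ) : ℕ∞) ≤ ⊤)]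
    exact iff_of_false (not_lt.mpr (min_le_left _ _)) (not_lt.mpr (min_le_left _ _))
  | coe x =>
    have hx : x ≠ m := by exact_mod_cast ha
    rcases lt_or_gt_of_ne hx with hxm | hxm
    · have e1 : min (m : ℕ∞) (x : ℕ∞) = (x : ℕ∞) := min_eq_right (by exact_mod_cast hxm.le)
      have e2 : min ((m+1:ℕ) : ℕ∞) (x : ℕ∞) = (x : ℕ∞) := by
        refine min_eq_right ?_
        exact_mod_cast Nat.le_succ_of_le hxm.le
      rw [e1, e2]
      induction b using ENat.recTopCoe with
      | top =>
        rw [min_eq_left (le_top : (m : ℕ∞) ≤ ⊤), min_eq_left (le_top : ((m+1:ℕ) : ℕ∞) ≤ ⊤)]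
        constructor
        · intro _; exact_mod_cast Nat.lt_succ_of_lt hxm
        · intro _; exact_mod_cast hxm
      | coe y =>
        have hy : y ≠ m := by exact_mod_cast hb
        rcases lt_or_gt_of_ne hy with hym | hym
        · have f1 : min (m : ℕ∞) (y : ℕ∞) = (y : ℕ∞) := min_eq_right (by exact_mod_cast hym.le)
          have f2 : min ((m+1:ℕ) : ℕ∞) (y : ℕ∞) = (y : ℕ∞) := by
            refine min_eq_right ?_
            exact_mod_cast Nat.le_succ_of_le hym.le
          rw [f1, f2]
        · have f1 : min (m : ℕ∞) (y : ℕ∞) = (m : ℕ∞) := min_eq_left (by exact_mod_cast hym.le)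
          have f2 : min ((m+1:ℕ) : ℕ∞) (y : ℕ∞) = ((m+1:ℕ) : ℕ∞) := by
            refine min_eq_left ?_
            exact_mod_cast hym
          rw [f1, f2]
          constructor
          · intro _; exact_mod_cast Nat.lt_succ_of_lt hxm
          · intro _; exact_mod_cast hxm
    · have e1 : min (m : ℕ∞) (x : ℕ∞) = (m : ℕ∞) := min_eq_left (by exact_mod_cast hxm.le)
      have e2 : min ((m+1:ℕ) : ℕ∞) (x : ℕ∞) = ((m+1:ℕ) : ℕ∞) :=
        min_eq_left (by exact_mod_cast hxm)
      rw [e1, e2]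
      refine iff_of_false ?_ ?_
      · exact not_lt.mpr (min_le_left _ _)
      · exact not_lt.mpr (min_le_left _ _)

lemma fp {K : Set (PTL P)} (hK : ∀ a ∈ K, InNormalForm a) {m : ℕ}
    (h : Sseq K (m + 1) = Sseq K m) : Sseq K (m + 2) = Sseq K (m + 1) := by
  have horder : ∀ u w : Val P, Rseq K m u < Rseq K m w ↔ Rseq K (m+1) u < Rseq K (m+1) w := by
    intro u w
    rw [rseq_eq_min hK, rseq_eq_min hK, rseq_eq_min hK, rseq_eq_min hK]
    exact min_order m _ _ (fE_ne_of_fix hK h u) (fE_ne_of_fix hK h w)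
  ext v
  rw [Sseq_succ, Sseq_succ, mem_KExt, mem_KExt]
  constructor
  · rintro ⟨-, hsat⟩
    exact ⟨rseq_lt_top K m v, fun a ha => (satR_order_iff horder a v).mpr (hsat a ha)⟩
  · rintro ⟨-, hsat⟩
    exact ⟨rseq_lt_top K (m+1) v, fun a ha => (satR_order_iff horder a v).mp (hsat a ha)⟩

lemma ncard_lb {K : Set (PTL P)} [Fintype P] (hK : ∀ a ∈ K, InNormalForm a) :
    ∀ i : ℕ, (∀ j, 1 ≤ j → j ≤ i → Sseq K j ≠ Sseq K (j - 1)) → i ≤ (Sseq K i).ncard := by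
  intro i
  induction i with
  | zero => intro _; exact Nat.zero_le _
  | succ i ih =>
    intro hne
    have hss : Sseq K i ⊂ Sseq K (i + 1) := by
      rw [Set.ssubset_iff_subset_ne]
      refine ⟨(invariant K hK i).1, ?_⟩
      intro heq
      exact hne (i + 1) (by omega) (le_refl _) (by simpa using heq.symm)
    have hlt := Set.ncard_lt_ncard hss (Set.toFinite _)
    have := ih (fun j h1 h2 => hne j h1 (by omega))
    omega

lemma stop_spec {K : Set (PTL P)} [Fintype P] (hK : ∀ a ∈ K, InNormalForm a) :
    1 ≤ stopIdx K ∧ Sseq K (stopIdx K) = Sseq K (stopIdx K - 1) := by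
  have hne : {i : ℕ | 1 ≤ i ∧ Sseq K i = Sseq K (i - 1)}.Nonempty := by
    by_contra hcon
    rw [Set.not_nonempty_iff_eq_empty] at hcon
    have hall : ∀ j, 1 ≤ j → Sseq K j ≠ Sseq K (j - 1) := by
      intro j h1 h2
      have : j ∈ {i : ℕ | 1 ≤ i ∧ Sseq K i = Sseq K (i - 1)} := ⟨h1, h2⟩
      rw [hcon] at this
      exact this
    set N := Nat.card (Val P) with hN
    have h1 := ncard_lb hK (N + 1) (fun j hj _ => hall j hj)
    have h2 : (Sseq K (N + 1)).ncard ≤ N := by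
      rw [hN, ← Set.ncard_univ]
      exact Set.ncard_le_ncard (Set.subset_univ _) (Set.toFinite _)
    omega
  exact Nat.sInf_mem hne

lemma S_fix_chain {K : Set (PTL P)} [Fintype P] (hK : ∀ a ∈ K, InNormalForm a) :
    ∀ n : ℕ, Sseq K (stopIdx K - 1 + n + 1) = Sseq K (stopIdx K - 1 + n) := by
  have h1 : stopIdx K - 1 + 1 = stopIdx K := Nat.succ_pred_eq_of_pos (stop_spec hK).1
  intro n
  induction n with
  | zero => rw [show stopIdx K - 1 + 0 + 1 = stopIdx K by omega,
      show stopIdx K - 1 + 0 = stopIdx K - 1 by omega]; exact (stop_spec hK).2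
  | succ n ih =>
    have := fp hK ih
    rwa [show stopIdx K - 1 + n + 2 = stopIdx K - 1 + (n + 1) + 1 by omega] at this

lemma S_eq_of_ge {K : Set (PTL P)} [Fintype P] (hK : ∀ a ∈ K, InNormalForm a) :
    ∀ n : ℕ, Sseq K (stopIdx K - 1 + n) = Sseq K (stopIdx K - 1) := by
  intro n
  induction n with
  | zero => rfl
  | succ n ih => rw [show stopIdx K - 1 + (n + 1) = stopIdx K - 1 + n + 1 by omega,
      S_fix_chain hK n, ih]

lemma mem_S_stop {K : Set (PTL P)} [Fintype P] (hK : ∀ a ∈ K, InNormalForm a)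
    {v : Val P} {m : ℕ} (h : v ∈ Sseq K (m + 1)) : v ∈ Sseq K (stopIdx K) := by
  have h1 : stopIdx K - 1 + 1 = stopIdx K := Nat.succ_pred_eq_of_pos (stop_spec hK).1
  rcases le_or_gt (m + 1) (stopIdx K) with hle | hlt
  · exact S_mono_le hK hle h
  · have h2 : stopIdx K - 1 ≤ m + 1 := by omega
    obtain ⟨n, hn⟩ := Nat.exists_eq_add_of_le h2
    rw [hn, S_eq_of_ge hK n] at h
    rw [(stop_spec hK).2]
    exact h

lemma Rstar_eq_fE {K : Set (PTL P)} [Fintype P] (hK : ∀ a ∈ K, InNormalForm a) (v : Val P) :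
    Rstar K v = fE K v := by
  have h1 : stopIdx K - 1 + 1 = stopIdx K := Nat.succ_pred_eq_of_pos (stop_spec hK).1
  unfold Rstar toInf
  split
  · next hv =>
    have hv' : v ∈ Sseq K (stopIdx K - 1 + 1) := by rw [h1]; exact hv
    have hle : fE K v ≤ ((stopIdx K - 1 : ℕ) : ℕ∞) := (mem_S_iff hK _ v).mp hv'
    rw [rseq_eq_min hK, min_eq_right hle]
  · next hv =>
    symm
    unfold fE
    split
    · next hex =>
      exact absurd (mem_S_stop hK (Nat.find_spec hex)) hv
    · rfl

end PTLAux


/-- layer-inclusion lemma: if the cells of `R*_K` and of a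
ranked model `R` of `K` agree below `i`, then the `i`-th cell of `R` is
included in that of `R*_K`. -/
theorem ptl_layer_inclusion {P : Type u} [Fintype P] [DecidableEq P]
    (K : Set (PTL P)) (hK : ∀ a ∈ K, InNormalForm a)
    (R : RankedInterp P) (hR : modelsSet R K) (i : ℕ)
    (h : ∀ j : ℕ, j < i → cell (Rstar K) (j : ℕ∞) = cell R.rk (j : ℕ∞)) :
    cell R.rk (i : ℕ∞) ⊆ cell (Rstar K) (i : ℕ∞) := by
  intro v hv
  have hvR : R.rk v = (i : ℕ∞) := hv
  -- Step 1 : ¬ fE K v < i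
  have hge : (i : ℕ∞) ≤ fE K v := by
    by_contra hcon
    push_neg at hcon
    obtain ⟨j, hj⟩ : ∃ j : ℕ, (j : ℕ∞) = fE K v :=
      WithTop.ne_top_iff_exists.mp (ne_top_of_lt hcon)
    have hji : j < i := by exact_mod_cast hj ▸ hcon
    have hcell : v ∈ cell (Rstar K) (j : ℕ∞) := by
      show Rstar K v = (j : ℕ∞)
      rw [Rstar_eq_fE hK, ← hj]
    rw [h j hji] at hcell
    have : (i : ℕ∞) = (j : ℕ∞) := hvR ▸ hcell
    have : i = j := by exact_mod_cast this
    omega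
  -- Step 2 : v ∈ S_{i+1}
  have hρv : Rseq K i v = (i : ℕ∞) := by
    rw [rseq_eq_min hK, min_eq_left hge]
  have hmem : v ∈ Sseq K (i + 1) := by
    rw [Sseq_succ, mem_KExt]
    refine ⟨rseq_lt_top K i v, ?_⟩
    intro a ha
    obtain ⟨ths, φ, pss, hths, hφ, hpss, rfl⟩ := hK a ha
    rw [sat_nf]
    intro hante
    -- transfer the antecedent to R
    have hanteR : ∀ θ ∈ ths, satR R.rk v (PTL.typ θ) := by
      intro θ hθ
      obtain ⟨h1, h2⟩ := hante θ hθ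
      refine ⟨(satR_prop_iff (hths θ hθ) _ _ _).mp h1, ?_⟩
      intro w hw hsatw
      rw [hvR] at hw
      obtain ⟨j, hjw⟩ : ∃ j : ℕ, (j : ℕ∞) = R.rk w :=
        WithTop.ne_top_iff_exists.mp (ne_top_of_lt hw)
      have hji : j < i := by exact_mod_cast hjw ▸ hw
      have hcw : w ∈ cell R.rk (j : ℕ∞) := hjw.symm
      rw [← h j hji] at hcw
      have hfw : fE K w = (j : ℕ∞) := by rw [← Rstar_eq_fE hK]; exact hcw
      have hρw : Rseq K i w = (j : ℕ∞) := by
        rw [rseq_eq_min hK, hfw, min_eq_right (by exact_mod_cast hji.le)]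
      refine h2 w ?_ ((satR_prop_iff (hths θ hθ) _ _ _).mp hsatw)
      rw [hρw, hρv]
      exact_mod_cast hji
    have hfin : R.rk v < ⊤ := by rw [hvR]; exact WithTop.coe_lt_top i
    have hsatRa := hR _ ha v hfin
    rw [sat_nf] at hsatRa
    rcases hsatRa hanteR with hφsat | ⟨ψ, hψ, hc1, hc2⟩
    · left; exact (satR_prop_iff hφ _ _ _).mp hφsat
    · right
      refine ⟨ψ, hψ, (satR_prop_iff (hpss ψ hψ) _ _ _).mp hc1, ?_⟩
      intro w hw hsatw
      rw [hρv] at hw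
      have hfwlt : fE K w < (i : ℕ∞) := by
        have := rseq_eq_min hK i w
        rw [this] at hw
        rcases min_lt_iff.mp hw with h' | h'
        · exact absurd h' (lt_irrefl _)
        · exact h'
      obtain ⟨j, hj⟩ : ∃ j : ℕ, (j : ℕ∞) = fE K w :=
        WithTop.ne_top_iff_exists.mp (ne_top_of_lt hfwlt)
      have hji : j < i := by exact_mod_cast hj ▸ hfwlt
      have hcw : w ∈ cell (Rstar K) (j : ℕ∞) := by
        show Rstar K w = (j : ℕ∞)
        rw [Rstar_eq_fE hK, ← hj]
      rw [h j hji] at hcw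
      refine hc2 w ?_ ((satR_prop_iff (hpss ψ hψ) _ _ _).mp hsatw)
      rw [hvR]
      show R.rk w < (i : ℕ∞)
      rw [hcw]
      exact_mod_cast hji
  have hle : fE K v ≤ (i : ℕ∞) := (mem_S_iff hK i v).mp hmem
  show Rstar K v = (i : ℕ∞)
  rw [Rstar_eq_fE hK]
  exact le_antisymm hle hge
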